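/- arXiv:1604.02441 — 4 statements merged into one kernel-verified Lean document; each statement's English description precedes it below -/
import Mathlib

section
/- Let I be a weighted-homogeneous ideal of k_a[x_0,...,x_n] over an algebraically closed field. Then V(I) = ∅ in ℙ(a_0,...,a_n) if and only if the irrelevant ideal (x_0,...,x_n) is contained in the radical of I. -/
open MvPolynomial

/-- The scaling equivalence on `𝔸^{n+1} ∖ {0}` defining weighted projective space:
`y ~ x` iff `y i = λ ^ (a i) * x i` for some unit `λ`. -/
def wpsRel {k : Type*} [Field k] {n : ℕ} (a : Fin (n + 1) → ℕ)
    (x y : {v : Fin (n + 1) → k // v ≠ 0}) : Prop :=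
  ∃ l : kˣ, ∀ i, y.1 i = (l : k) ^ a i * x.1 i

/-- Weighted projective space `ℙ(a_0, …, a_n)` as the quotient of
`𝔸^{n+1} ∖ {0}` by the weighted scaling action. -/
def WPS (k : Type*) [Field k] {n : ℕ} (a : Fin (n + 1) → ℕ) :=
  Quot (wpsRel (k := k) a)

/-- The vanishing locus in weighted projective space of an ideal. -/
def zeroLocus {k : Type*} [Field k] {n : ℕ} (a : Fin (n + 1) → ℕ)
    (I : Ideal (MvPolynomial (Fin (n + 1)) k)) : Set (WPS k a) :=
  {p | ∀ x : {v : Fin (n + 1) → k // v ≠ 0},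
    Quot.mk (wpsRel a) x = p → ∀ f ∈ I, eval x.1 f = 0}

/-- An ideal of the weighted polynomial ring is weighted-homogeneous if it can be
generated by weighted-homogeneous polynomials. -/
def IsWeightedHomogeneousIdeal {k : Type*} [Field k] {n : ℕ} (a : Fin (n + 1) → ℕ)
    (I : Ideal (MvPolynomial (Fin (n + 1)) k)) : Prop :=
  ∃ S : Set (MvPolynomial (Fin (n + 1)) k),
    (∀ g ∈ S, ∃ d : ℕ, g.IsWeightedHomogeneous a d) ∧ I = Ideal.span S

/-- Evaluating a weighted-homogeneous polynomial at a weighted scaling of a point. -/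
lemma eval_weighted_scale {k : Type*} [Field k] {n : ℕ} {a : Fin (n + 1) → ℕ}
    {g : MvPolynomial (Fin (n + 1)) k} {d : ℕ} (hg : g.IsWeightedHomogeneous a d)
    (c : k) (x : Fin (n + 1) → k) :
    eval (fun i => c ^ a i * x i) g = c ^ d * eval x g := by
  rw [eval_eq', eval_eq', Finset.mul_sum]
  apply Finset.sum_congr rfl
  intro m hm
  have hd : ∑ i, m i * a i = d := by
    have := hg (mem_support_iff.mp hm)
    rw [← this, Finsupp.weight_apply, Finsupp.sum_fintype]
    · simp [smul_eq_mul]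
    · intro i; simp
  calc coeff m g * ∏ i, (c ^ a i * x i) ^ m i
      = coeff m g * ((∏ i, c ^ (a i * m i)) * ∏ i, x i ^ m i) := by
        rw [← Finset.prod_mul_distrib]
        congr 1
        apply Finset.prod_congr rfl
        intro i _
        rw [mul_pow, pow_mul]
    _ = c ^ d * (coeff m g * ∏ i, x i ^ m i) := by
        rw [Finset.prod_pow_eq_pow_sum]
        rw [show ∑ i, a i * m i = d by rw [← hd]; simp [mul_comm]]
        ring

lemma wpsRel_symm {k : Type*} [Field k] {n : ℕ} {a : Fin (n + 1) → ℕ}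
    {x y : {v : Fin (n + 1) → k // v ≠ 0}} (h : wpsRel a x y) : wpsRel a y x := by
  obtain ⟨l, hl⟩ := h
  refine ⟨l⁻¹, fun i => ?_⟩
  rw [hl i, ← mul_assoc, ← mul_pow]
  simp

lemma wpsRel_vanish {k : Type*} [Field k] {n : ℕ} {a : Fin (n + 1) → ℕ}
    {I : Ideal (MvPolynomial (Fin (n + 1)) k)} (hI : IsWeightedHomogeneousIdeal a I)
    {x y : {v : Fin (n + 1) → k // v ≠ 0}} (h : wpsRel a x y)
    (hx : ∀ f ∈ I, eval x.1 f = 0) : ∀ f ∈ I, eval y.1 f = 0 := by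
  obtain ⟨S, hS, rfl⟩ := hI
  obtain ⟨l, hl⟩ := h
  intro f hf
  have : Ideal.span S ≤ RingHom.ker (eval y.1) := by
    rw [Ideal.span_le]
    intro g hg
    obtain ⟨d, hgd⟩ := hS g hg
    have : y.1 = fun i => (l : k) ^ a i * x.1 i := funext hl
    rw [SetLike.mem_coe, RingHom.mem_ker, this, eval_weighted_scale hgd,
      hx g (Ideal.subset_span hg), mul_zero]
  exact this hf

lemma eqvGen_vanish {k : Type*} [Field k] {n : ℕ} {a : Fin (n + 1) → ℕ}
    {I : Ideal (MvPolynomial (Fin (n + 1)) k)} (hI : IsWeightedHomogeneousIdeal a I)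
    {x y : {v : Fin (n + 1) → k // v ≠ 0}} (h : Relation.EqvGen (wpsRel a) x y) :
    (∀ f ∈ I, eval x.1 f = 0) ↔ (∀ f ∈ I, eval y.1 f = 0) := by
  induction h with
  | rel u v huv => exact ⟨wpsRel_vanish hI huv, wpsRel_vanish hI (wpsRel_symm huv)⟩
  | refl => rfl
  | symm _ _ _ ih => exact ih.symm
  | trans _ _ _ _ _ ih1 ih2 => exact ih1.trans ih2

theorem zeroLocus_empty_iff_irrelevant_subset_radical
    {k : Type*} [Field k] [IsAlgClosed k] {n : ℕ}
    (a : Fin (n + 1) → ℕ) (ha : ∀ i, 0 < a i)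
    (I : Ideal (MvPolynomial (Fin (n + 1)) k))
    (hI : IsWeightedHomogeneousIdeal a I) :
    zeroLocus a I = ∅ ↔
      Ideal.span (Set.range (X : Fin (n + 1) → MvPolynomial (Fin (n + 1)) k))
        ≤ I.radical := by
  have hrad := MvPolynomial.vanishingIdeal_zeroLocus_eq_radical (K := k) I
  constructor
  · intro h
    rw [← hrad, Ideal.span_le]
    rintro _ ⟨i, rfl⟩
    rw [SetLike.mem_coe, mem_vanishingIdeal_iff]
    intro x hx
    rw [aeval_X]
    by_contra hxi
    have hx0 : x ≠ 0 := fun h0 => hxi (by rw [h0]; rfl)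
    have hmem : Quot.mk (wpsRel a) ⟨x, hx0⟩ ∈ zeroLocus a I := by
      intro y hy f hf
      have heq := Quot.eqvGen_exact hy
      exact (eqvGen_vanish hI heq).mpr (fun g hg => hx g hg) f hf
    rw [h] at hmem
    exact hmem
  · intro h
    rw [Set.eq_empty_iff_forall_notMem]
    intro p hp
    obtain ⟨x, rfl⟩ := Quot.exists_rep p
    have hx : x.1 ∈ MvPolynomial.zeroLocus k I := fun f hf => hp x rfl f hf
    apply x.2
    funext i
    have hXi : (X i : MvPolynomial (Fin (n + 1)) k) ∈ I.radical :=
      h (Ideal.subset_span ⟨i, rfl⟩)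
    rw [← hrad, mem_vanishingIdeal_iff] at hXi
    have := hXi x.1 hx
    rwa [aeval_X] at this
end

section
/- Weighted projective Nullstellensatz: if I is a weighted-homogeneous relevant ideal of k_a[x_0,...,x_n] over an algebraically closed field k (i.e. I is strictly contained in the irrelevant ideal and V(I) ≠ ∅), then I(V(I)) = √I. -/
open MvPolynomial

/-- The set of weighted-homogeneous polynomials vanishing at every point of a
subset `V` of weighted projective space. -/
def vanishingSet {k : Type*} [Field k] {n : ℕ} (a : Fin (n + 1) → ℕ)
    (V : Set (WPS k a)) : Set (MvPolynomial (Fin (n + 1)) k) :=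
  {f | (∃ d : ℕ, f.IsWeightedHomogeneous a d) ∧
    ∀ x : {v : Fin (n + 1) → k // v ≠ 0},
      Quot.mk (wpsRel a) x ∈ V → eval x.1 f = 0}

/-- Evaluating a weighted-homogeneous polynomial at a weighted scaling of a point. -/
lemma wps_eval_scale {k : Type*} [Field k] {n : ℕ} (a : Fin (n + 1) → ℕ)
    {g : MvPolynomial (Fin (n + 1)) k} {d : ℕ} (hg : g.IsWeightedHomogeneous a d)
    (l : k) (x : Fin (n + 1) → k) :
    eval (fun i => l ^ a i * x i) g = l ^ d * eval x g := by
  rw [eval_eq, eval_eq, Finset.mul_sum]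
  apply Finset.sum_congr rfl
  intro m hm
  have hw : (Finsupp.weight a) m = d := hg (mem_support_iff.mp hm)
  have hprod : (∏ i ∈ m.support, (l ^ a i * x i) ^ m i)
      = l ^ d * ∏ i ∈ m.support, x i ^ m i := by
    calc ∏ i ∈ m.support, (l ^ a i * x i) ^ m i
        = ∏ i ∈ m.support, (l ^ (m i * a i) * x i ^ m i) := by
          apply Finset.prod_congr rfl; intro i _
          rw [mul_pow, ← pow_mul, mul_comm (a i)]
      _ = (∏ i ∈ m.support, l ^ (m i * a i)) * ∏ i ∈ m.support, x i ^ m i :=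
          Finset.prod_mul_distrib
      _ = l ^ d * ∏ i ∈ m.support, x i ^ m i := by
          rw [Finset.prod_pow_eq_pow_sum, ← hw, Finsupp.weight_apply, Finsupp.sum]
          simp [smul_eq_mul]
  rw [hprod]; ring

lemma wpsRel_equivalence {k : Type*} [Field k] {n : ℕ} (a : Fin (n + 1) → ℕ) :
    Equivalence (wpsRel (k := k) a) := by
  constructor
  · intro x; exact ⟨1, by simp⟩
  · rintro x y ⟨l, hl⟩
    refine ⟨l⁻¹, fun i => ?_⟩
    rw [hl i, ← mul_assoc, ← mul_pow]
    simp
  · rintro x y z ⟨l, hl⟩ ⟨m, hm⟩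
    refine ⟨m * l, fun i => ?_⟩
    rw [hm i, hl i, Units.val_mul, mul_pow]
    ring

lemma wps_eval_span_zero {k : Type*} [Field k] {n : ℕ} (a : Fin (n + 1) → ℕ)
    (S : Set (MvPolynomial (Fin (n + 1)) k))
    (hS : ∀ g ∈ S, ∃ d : ℕ, g.IsWeightedHomogeneous a d)
    {x y : Fin (n + 1) → k} (l : k)
    (hxy : ∀ i, y i = l ^ a i * x i)
    (hx : ∀ f ∈ Ideal.span S, eval x f = 0) :
    ∀ f ∈ Ideal.span S, eval y f = 0 := by
  intro f hf
  have hle : Ideal.span S ≤ RingHom.ker (eval y) := by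
    rw [Ideal.span_le]
    intro g hg
    obtain ⟨d, hd⟩ := hS g hg
    have hy : y = fun i => l ^ a i * x i := funext hxy
    rw [SetLike.mem_coe, RingHom.mem_ker, hy, wps_eval_scale a hd,
      hx g (Ideal.subset_span hg), mul_zero]
  exact hle hf


theorem weighted_projective_nullstellensatz
    {k : Type*} [Field k] [IsAlgClosed k] {n : ℕ}
    (a : Fin (n + 1) → ℕ) (ha : ∀ i, 0 < a i)
    (I : Ideal (MvPolynomial (Fin (n + 1)) k))
    (hI : IsWeightedHomogeneousIdeal a I)
    (hrel : I < Ideal.span (Set.range (X : Fin (n + 1) → MvPolynomial (Fin (n + 1)) k)))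
    (hne : zeroLocus a I ≠ ∅) :
    Ideal.span (vanishingSet a (zeroLocus a I)) = I.radical := by
  classical
  obtain ⟨S, hS, hspan⟩ := hI
  letI : GradedAlgebra (weightedHomogeneousSubmodule k a) := weightedGradedAlgebra k a
  have hIhom : I.IsHomogeneous (weightedHomogeneousSubmodule k a) := by
    rw [hspan]
    exact Ideal.homogeneous_span _ _ fun g hg =>
      (hS g hg).imp fun d hd => (mem_weightedHomogeneousSubmodule _ _ _ _).mpr hd
  have hrad := hIhom.radical
  -- a base point in the zero locus
  obtain ⟨p, hp⟩ := Set.nonempty_iff_ne_empty.mpr hne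
  obtain ⟨x0, rfl⟩ := Quot.exists_rep p
  have hx0 : ∀ f ∈ I, eval x0.1 f = 0 := hp x0 rfl
  -- membership characterization for the projective zero locus
  have key : ∀ x : {v : Fin (n + 1) → k // v ≠ 0}, (∀ f ∈ I, eval x.1 f = 0) →
      Quot.mk (wpsRel a) x ∈ zeroLocus a I := by
    intro x hx y hy f hf
    have hr : wpsRel a x y :=
      (wpsRel_equivalence a).symm (((wpsRel_equivalence a).eqvGen_iff).mp (Quot.eqvGen_exact hy))
    obtain ⟨l, hl⟩ := hr
    rw [hspan] at hx hf
    exact wps_eval_span_zero a S hS (l : k) hl hx f hf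
  apply le_antisymm
  · rw [Ideal.span_le]
    rintro f ⟨⟨d, hfd⟩, hvan⟩
    rw [SetLike.mem_coe, ← MvPolynomial.vanishingIdeal_zeroLocus_eq_radical (K := k),
      MvPolynomial.mem_vanishingIdeal_iff]
    intro x hx
    show eval x f = 0
    by_cases hxz : x = 0
    · subst hxz
      by_cases hd : d = 0
      · -- f is a constant
        have hm0 : ∀ m ∈ f.support, m = (0 : Fin (n + 1) →₀ ℕ) := by
          intro m hm
          have hw : (Finsupp.weight a) m = d := hfd (mem_support_iff.mp hm)
          rw [hd, Finsupp.weight_apply, Finsupp.sum] at hw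
          ext i
          by_contra hi
          have := Finset.sum_eq_zero_iff.mp hw i (Finsupp.mem_support_iff.mpr hi)
          rcases Nat.mul_eq_zero.mp (by simpa [smul_eq_mul] using this) with h | h
          · exact hi h
          · exact (ha i).ne' h
        have hfC : f = C (coeff 0 f) := by
          ext m
          by_cases hm : m = 0
          · subst hm; simp
          · rw [coeff_C, if_neg (Ne.symm hm)]
            by_contra hc
            exact hm (hm0 m (mem_support_iff.mpr hc))
        have h0 : eval x0.1 f = 0 := hvan x0 hp
        rw [hfC, eval_C] at h0 ⊢
        exact h0
      · -- positive degree: the constant coefficient vanishes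
        have hcc : constantCoeff f = 0 := by
          by_contra h
          rw [constantCoeff_eq] at h
          have := hfd h
          rw [map_zero] at this
          exact hd this.symm
        rw [show (0 : Fin (n + 1) → k) = (fun _ => 0) from rfl, eval_zero']
        exact hcc
    · exact hvan ⟨x, hxz⟩ (key ⟨x, hxz⟩ (MvPolynomial.mem_zeroLocus_iff.mp hx))
  · intro f hf
    rw [← DirectSum.sum_support_decompose (weightedHomogeneousSubmodule k a) f]
    apply Ideal.sum_mem
    intro d _
    apply Ideal.subset_span
    refine ⟨⟨d, (mem_weightedHomogeneousSubmodule _ _ _ _).mp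
      (DirectSum.decompose (weightedHomogeneousSubmodule k a) f d).2⟩, ?_⟩
    intro x hx
    have hc : ((DirectSum.decompose (weightedHomogeneousSubmodule k a) f d :
        weightedHomogeneousSubmodule k a d) : MvPolynomial (Fin (n + 1)) k) ∈ I.radical :=
      hrad d hf
    obtain ⟨m, hm⟩ := hc
    have h0 := hx x rfl _ hm
    rw [map_pow] at h0
    exact (pow_eq_zero_iff'.mp h0).1
end

section
/- A maximal weighted-homogeneous ideal (one that is relevant and maximal among relevant weighted-homogeneous ideals) of k_a[x_0,...,x_n] is a radical ideal. -/
open MvPolynomial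

/-- A weighted-homogeneous ideal is *relevant* if it is strictly contained in the
irrelevant ideal `(x_0, …, x_n)` and has nonempty vanishing locus. -/
def IsRelevant {k : Type*} [Field k] {n : ℕ} (a : Fin (n + 1) → ℕ)
    (I : Ideal (MvPolynomial (Fin (n + 1)) k)) : Prop :=
  I < Ideal.span (Set.range (X : Fin (n + 1) → MvPolynomial (Fin (n + 1)) k)) ∧
    zeroLocus a I ≠ ∅


lemma mem_span_range_X_iff {k : Type*} [Field k] {n : ℕ}
    {f : MvPolynomial (Fin (n + 1)) k} :
    f ∈ Ideal.span (Set.range (X : Fin (n + 1) → MvPolynomial (Fin (n + 1)) k)) ↔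
      constantCoeff f = 0 := by
  rw [← Set.image_univ, MvPolynomial.mem_ideal_span_X_image]
  rw [show (constantCoeff f = 0) ↔ coeff 0 f = 0 from Iff.rfl, ← notMem_support_iff]
  constructor
  · intro h h0
    obtain ⟨i, -, hi⟩ := h 0 h0
    simp at hi
  · intro h m hm
    by_contra hc
    push_neg at hc
    apply h
    have : m = 0 := by
      ext i
      simpa using hc i (Set.mem_univ i)
    rwa [this] at hm

set_option maxHeartbeats 1000000 in
theorem maximal_weighted_homogeneous_ideal_is_radical
    {k : Type*} [Field k] [IsAlgClosed k] {n : ℕ}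
    (a : Fin (n + 1) → ℕ) (ha : ∀ i, 0 < a i)
    (I : Ideal (MvPolynomial (Fin (n + 1)) k))
    (hwh : IsWeightedHomogeneousIdeal a I) (hrel : IsRelevant a I)
    (hmax : ∀ J : Ideal (MvPolynomial (Fin (n + 1)) k),
      IsWeightedHomogeneousIdeal a J → I < J → ¬ IsRelevant a J) :
    I.IsRadical := by
  classical
  letI : GradedAlgebra (weightedHomogeneousSubmodule k a) := weightedGradedAlgebra k a
  -- `I` is a homogeneous ideal in the graded-algebra sense
  have hIh : I.IsHomogeneous (weightedHomogeneousSubmodule k a) := by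
    obtain ⟨S, hSdeg, rfl⟩ := hwh
    exact Ideal.homogeneous_span _ S fun g hg => by
      obtain ⟨d, hd⟩ := hSdeg g hg
      exact ⟨d, (mem_weightedHomogeneousSubmodule _ _ _ _).2 hd⟩
  have hrad : I.radical.IsHomogeneous (weightedHomogeneousSubmodule k a) := hIh.radical
  -- hence the radical is weighted-homogeneous
  have hwh' : IsWeightedHomogeneousIdeal a I.radical := by
    obtain ⟨T, hT⟩ := (Ideal.IsHomogeneous.iff_exists _ _).1 hrad
    refine ⟨(↑) '' T, ?_, hT⟩
    rintro g ⟨⟨g', ⟨d, hd⟩⟩, -, rfl⟩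
    exact ⟨d, (mem_weightedHomogeneousSubmodule _ _ _ _).1 hd⟩
  -- the radical has the same zero locus
  have hzl : zeroLocus a I ⊆ zeroLocus a I.radical := by
    intro p hp x hx f hf
    obtain ⟨r, hr⟩ := hf
    have h0 := hp x hx _ hr
    rw [map_pow] at h0
    rcases Nat.eq_zero_or_pos r with h | h
    · exfalso; rw [h, pow_zero] at h0; exact one_ne_zero h0
    · exact pow_eq_zero_iff h.ne' |>.1 h0
  -- the radical is contained in the irrelevant ideal
  have hle : I.radical ≤ Ideal.span
      (Set.range (X : Fin (n + 1) → MvPolynomial (Fin (n + 1)) k)) := by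
    intro f hf
    obtain ⟨r, hr⟩ := hf
    have h0 : constantCoeff (f ^ r) = 0 := mem_span_range_X_iff.1 (hrel.1.le hr)
    rw [map_pow] at h0
    rcases Nat.eq_zero_or_pos r with h | h
    · exfalso; rw [h, pow_zero] at h0; exact one_ne_zero h0
    · exact mem_span_range_X_iff.2 (pow_eq_zero_iff h.ne' |>.1 h0)
  -- the radical is not the irrelevant ideal
  have hne : I.radical ≠ Ideal.span
      (Set.range (X : Fin (n + 1) → MvPolynomial (Fin (n + 1)) k)) := by
    intro heq
    have hne' : zeroLocus a I.radical ≠ ∅ := fun h =>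
      hrel.2 (Set.subset_empty_iff.1 (h ▸ hzl))
    obtain ⟨p, hp⟩ := Set.nonempty_iff_ne_empty.2 hne'
    obtain ⟨x, hx⟩ := Quot.exists_rep p
    apply x.2
    funext i
    have := hp x hx (X i) (heq ▸ Ideal.subset_span ⟨i, rfl⟩)
    simpa using this
  have hrel' : IsRelevant a I.radical :=
    ⟨lt_of_le_of_ne hle hne, fun h => hne (absurd h (fun h' =>
      (Set.nonempty_iff_ne_empty.2 (fun h0 => hrel.2 (Set.subset_empty_iff.1 (h0 ▸ hzl)))).ne_empty h'))⟩
  rcases eq_or_lt_of_le (Ideal.le_radical (I := I)) with h | h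
  · exact Ideal.radical_eq_iff.1 h.symm
  · exact absurd hrel' (hmax _ hwh' h)
end

section
/- Let f ∈ k_a[x_0,x_1,x_2] be a sufficiently general weighted-homogeneous polynomial of degree d, and let p_i ∈ ℙ(a_0,a_1,a_2) be the i-th coordinate point (e.g. p_0 = |1:0:0|). Then p_i lies on the plane curve C_f = V(f) if and only if a_i does not divide d; moreover, if p_i ∈ C_f then p_i is not a singular point of f. -/
open MvPolynomial

/-- A weighted-homogeneous polynomial of degree `d` is *sufficiently general* if:
`d ≥ 2`; every weight satisfies `a i ≤ d`; whenever `a i ∣ d` it has a nonzero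
`x_i ^ (d / a_i)` term; and whenever `a i ∤ d` it has a nonzero
`x_j * x_i ^ ((d - a_j) / a_i)` term for some `j ≠ i` with `a i ∣ (d - a j)`. -/
def SufficientlyGeneral {k : Type*} [Field k] (a : Fin 3 → ℕ) (d : ℕ)
    (f : MvPolynomial (Fin 3) k) : Prop :=
  2 ≤ d ∧ (∀ i, a i ≤ d) ∧
  (∀ i, a i ∣ d → coeff (Finsupp.single i (d / a i)) f ≠ 0) ∧
  (∀ i, ¬ a i ∣ d → ∃ j, j ≠ i ∧ a i ∣ (d - a j) ∧
    coeff (Finsupp.single j 1 + Finsupp.single i ((d - a j) / a i)) f ≠ 0)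

lemma wsingle (a : Fin 3 → ℕ) (i : Fin 3) (n : ℕ) :
    Finsupp.weight a (Finsupp.single i n) = n * a i := by
  simp [Finsupp.weight_apply, Finsupp.sum_single_index, smul_eq_mul]

lemma coeff_pderiv' {σ : Type*} [DecidableEq σ] {R : Type*} [CommSemiring R]
    (g : MvPolynomial σ R) (j : σ) (m : σ →₀ ℕ) :
    coeff m (pderiv j g) = (m j + 1) * coeff (m + Finsupp.single j 1) g := by
  induction g using MvPolynomial.induction_on' with
  | monomial u c =>
    rw [pderiv_monomial, coeff_monomial, coeff_monomial]
    by_cases h : u = m + Finsupp.single j 1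
    · subst h
      rw [if_pos (add_tsub_cancel_right _ _), if_pos rfl]
      simp [mul_comm]
    · rw [if_neg h]
      by_cases hj : u j = 0
      · simp only [mul_zero, hj]
        split <;> ring
      · rw [if_neg, mul_zero]
        intro he
        apply h
        rw [← he, tsub_add_cancel_of_le]
        exact Finsupp.single_le_iff.mpr (Nat.one_le_iff_ne_zero.mpr hj)
  | add p q hp hq => simp [hp, hq, mul_add]

lemma eval_single_eq {k : Type*} [CommSemiring k] (g : MvPolynomial (Fin 3) k) (i : Fin 3) :
    eval (Pi.single i (1 : k)) g =
      ∑ m ∈ g.support, if ∀ j, j ≠ i → m j = 0 then coeff m g else 0 := by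
  rw [eval_eq']
  refine Finset.sum_congr rfl fun m hm => ?_
  by_cases h : ∀ j, j ≠ i → m j = 0
  · rw [if_pos h]
    have h1 : ∀ j : Fin 3, (Pi.single i (1:k) : Fin 3 → k) j ^ m j = 1 := by
      intro j
      by_cases hj : j = i
      · subst hj; simp
      · rw [h j hj, pow_zero]
    rw [Finset.prod_congr rfl fun j _ => h1 j]
    simp
  · push_neg at h
    obtain ⟨j, hj, hmj⟩ := h
    rw [if_neg, Finset.prod_eq_zero (Finset.mem_univ j), mul_zero]
    · rw [Pi.single_eq_of_ne hj, zero_pow hmj]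
    · push_neg; exact ⟨j, hj, hmj⟩

lemma finsupp_eq_single {i : Fin 3} {m : Fin 3 →₀ ℕ} (h : ∀ j, j ≠ i → m j = 0) :
    m = Finsupp.single i (m i) := by
  ext j
  by_cases hj : j = i
  · subst hj; simp
  · rw [h j hj, Finsupp.single_eq_of_ne' (fun he => hj he.symm)]

lemma eval_single_of_unique {k : Type*} [CommSemiring k] (g : MvPolynomial (Fin 3) k)
    (i : Fin 3) (t : Fin 3 →₀ ℕ) (ht : ∀ j, j ≠ i → t j = 0)
    (h : ∀ m, coeff m g ≠ 0 → (∀ j, j ≠ i → m j = 0) → m = t) :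
    eval (Pi.single i (1 : k)) g = coeff t g := by
  rw [eval_single_eq]
  have hcongr : ∀ m ∈ g.support,
      (if ∀ j, j ≠ i → m j = 0 then coeff m g else 0) = if m = t then coeff m g else 0 := by
    intro m hm
    rw [mem_support_iff] at hm
    by_cases hp : ∀ j, j ≠ i → m j = 0
    · rw [if_pos hp, if_pos (h m hm hp)]
    · rw [if_neg hp, if_neg]
      intro he; subst he; exact hp ht
  rw [Finset.sum_congr rfl hcongr, Finset.sum_ite_eq' g.support t (fun m => coeff m g)]
  split
  · rfl
  · next hne => exact ((notMem_support_iff.mp hne).symm)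

theorem coordinate_points_on_sufficiently_general_curve
    {k : Type*} [Field k] [IsAlgClosed k]
    (a : Fin 3 → ℕ) (ha : ∀ i, 0 < a i)
    (f : MvPolynomial (Fin 3) k) (d : ℕ)
    (hf : f.IsWeightedHomogeneous a d) (hgen : SufficientlyGeneral a d f)
    (i : Fin 3) :
    (eval (Pi.single i (1 : k)) f = 0 ↔ ¬ a i ∣ d) ∧
    (eval (Pi.single i (1 : k)) f = 0 →
      ∃ j : Fin 3, eval (Pi.single i (1 : k)) (pderiv j f) ≠ 0) := by
  obtain ⟨hd2, hle, hdiag, hoff⟩ := hgen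
  -- key fact: any monomial of `f` supported only at `i` has `m i * a i = d`
  have key : ∀ m : Fin 3 →₀ ℕ, coeff m f ≠ 0 → (∀ j, j ≠ i → m j = 0) →
      m = Finsupp.single i (m i) ∧ m i * a i = d := by
    intro m hm hp
    have h1 := finsupp_eq_single hp
    have h2 := hf hm
    rw [h1, wsingle] at h2
    exact ⟨h1, h2⟩
  have hiff : eval (Pi.single i (1 : k)) f = 0 ↔ ¬ a i ∣ d := by
    constructor
    · intro h0 hdvd
      have heval : eval (Pi.single i (1 : k)) f = coeff (Finsupp.single i (d / a i)) f := by
        apply eval_single_of_unique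
        · intro j hj; exact Finsupp.single_eq_of_ne' (fun he => hj he.symm)
        · intro m hm hp
          obtain ⟨h1, h2⟩ := key m hm hp
          have : m i = d / a i := by
            rw [← h2, Nat.mul_div_cancel _ (ha i)]
          rw [h1, this]
      exact hdiag i hdvd (heval ▸ h0)
    · intro hnd
      rw [eval_single_eq]
      apply Finset.sum_eq_zero
      intro m hm
      rw [if_neg]
      intro hp
      rw [mem_support_iff] at hm
      exact hnd ⟨m i, ((key m hm hp).2.symm.trans (mul_comm _ _))⟩
  refine ⟨hiff, fun h0 => ?_⟩
  have hnd := hiff.mp h0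
  obtain ⟨j, hji, hdvd, hc⟩ := hoff i hnd
  refine ⟨j, ?_⟩
  set n := (d - a j) / a i with hn
  have hij : i ≠ j := fun he => hji he.symm
  have heval : eval (Pi.single i (1 : k)) (pderiv j f) =
      coeff (Finsupp.single i n) (pderiv j f) := by
    apply eval_single_of_unique
    · intro l hl; exact Finsupp.single_eq_of_ne' (fun he => hl he.symm)
    · intro m hm hp
      rw [coeff_pderiv'] at hm
      have hm' : coeff (m + Finsupp.single j 1) f ≠ 0 := by
        intro h; rw [h, mul_zero] at hm; exact hm rfl
      have h2 := hf hm'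
      have h1 := finsupp_eq_single hp
      rw [map_add, h1, wsingle, wsingle, one_mul] at h2
      have hmi : m i * a i = d - a j := by omega
      have : m i = n := by
        rw [hn, ← hmi, Nat.mul_div_cancel _ (ha i)]
      rw [h1, this]
  rw [heval, coeff_pderiv', Finsupp.single_eq_of_ne' hij, add_comm (Finsupp.single i n)]
  simpa using hc
end
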